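/- arXiv:1412.1645 — 3 statements merged into one kernel-verified Lean document; each statement's English description precedes it below -/
import Mathlib

section
/- For every m ∈ ℕ, the truncation map ρ_m : 𝓗 → 𝓗_m, (φ_k)_{k≥0} ↦ (φ_k)_{k=0}^{m}, is surjective. -/
noncomputable section

/-- The circle group 𝕋. -/
abbrev 𝕋 := Circle

/-- Generalised binomial coefficient `C(n,k)` for integer `n`. -/
def gchoose (n : ℤ) (k : ℕ) : ℤ := Ring.choose n k

/-- Signed Stirling numbers of the first kind, `s(k,j)`, determined by
`k! · C(n,k) = Σ_{j=0}^k s(k,j) n^j`. -/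
def stir : ℕ → ℕ → ℤ
  | 0, 0 => 1
  | 0, _ + 1 => 0
  | _ + 1, 0 => 0
  | k + 1, j + 1 => stir k j - (k : ℤ) * stir k (j + 1)

/-- `H(𝕋)`: the set of (not necessarily continuous) group homomorphisms 𝕋 → 𝕋,
as a subset of the product space `𝕋 → 𝕋` (pointwise convergence topology). -/
def HSet : Set (𝕋 → 𝕋) := {f | ∀ x y : 𝕋, f (x * y) = f x * f y}

/-- `𝕋_Q`: the torsion subgroup of 𝕋. -/
def TQ : Set 𝕋 := {x | ∃ n : ℕ, 0 < n ∧ x ^ n = 1}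

/-- The space 𝓗 ⊆ H(𝕋)^{ℤ≥0}: sequences satisfying (H.0) and (H.∞). -/
def Hcal : Set (ℕ → 𝕋 → 𝕋) :=
  {φ | (∀ k, φ k ∈ HSet) ∧ φ 0 = (fun x => x) ∧
    ∀ k, 1 ≤ k → ∀ x ∈ TQ,
      φ k (x ^ Nat.factorial k) = ∏ j ∈ Finset.Icc 1 k, (φ 1)^[j] (x ^ stir k j)}

/-- The element `ñ` (whose `k`-th entry is `C(n,k)^×`), for `n : ℤ`. -/
def ntil (n : ℤ) : ℕ → 𝕋 → 𝕋 := fun k x => x ^ gchoose n k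

/-- The homeomorphism `T` of `H(𝕋)^{ℤ≥0}`: `T(φ) = (φ_0, φ_0φ_1, φ_1φ_2, …)`. -/
def Tmap (φ : ℕ → 𝕋 → 𝕋) : ℕ → 𝕋 → 𝕋 :=
  fun k => match k with
  | 0 => φ 0
  | k + 1 => fun x => φ k x * φ (k + 1) x

/-- The group operation ⋆ on 𝓗: `(φ ⋆ ψ)_k = ∏_{j=0}^k φ_{k-j} ∘ ψ_j`. -/
def hmul (φ ψ : ℕ → 𝕋 → 𝕋) : ℕ → 𝕋 → 𝕋 :=
  fun k x => ∏ j ∈ Finset.range (k + 1), φ (k - j) (ψ j x)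

/-- The space `𝓗_m`, realised with index type `Fin (m+1)` (so `HFin N` has
indices `0, …, N-1`; `𝓗_m = HFin (m+1)`). -/
def HFin (N : ℕ) : Set (Fin N → 𝕋 → 𝕋) :=
  {φ | (∀ k, φ k ∈ HSet) ∧ (∀ k : Fin N, (k : ℕ) = 0 → φ k = fun x => x) ∧
    ∀ k : Fin N, ∀ hk : 1 ≤ (k : ℕ), ∀ x ∈ TQ,
      φ k (x ^ Nat.factorial (k : ℕ)) =
        ∏ j ∈ Finset.Icc 1 (k : ℕ),
          (φ ⟨1, lt_of_le_of_lt hk k.isLt⟩)^[j] (x ^ stir (k : ℕ) j)}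

namespace Aux

open Finset Function

lemma hset_one {f : 𝕋 → 𝕋} (hf : f ∈ HSet) : f 1 = 1 :=
  (MonoidHom.mk' f hf).map_one

lemma hset_pow {f : 𝕋 → 𝕋} (hf : f ∈ HSet) (x : 𝕋) (n : ℕ) : f (x ^ n) = f x ^ n :=
  (MonoidHom.mk' f hf).map_pow x n

lemma hset_iterate {f : 𝕋 → 𝕋} (hf : f ∈ HSet) (j : ℕ) : f^[j] ∈ HSet := by
  induction j with
  | zero => intro x y; simp
  | succ j ih =>
      intro x y
      rw [Function.iterate_succ_apply', Function.iterate_succ_apply',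
        Function.iterate_succ_apply', ih x y, hf]

lemma exp_pow (t : ℝ) (n : ℕ) : Circle.exp t ^ n = Circle.exp (n * t) := by
  induction n with
  | zero => simp
  | succ n ih => rw [pow_succ, ih, ← Circle.exp_add]; push_cast; ring_nf

lemma coe_pow (x : 𝕋) (n : ℕ) : ((x ^ n : 𝕋) : ℂ) = (x : ℂ) ^ n :=
  map_pow Circle.coeHom x n

lemma exists_pow_rep {f : 𝕋 → 𝕋} (hf : f ∈ HSet) {N : ℕ} (hN : 0 < N) :
    ∃ a : ℕ, ∀ x : 𝕋, x ^ N = 1 → f x = x ^ a := by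
  haveI : NeZero N := ⟨hN.ne'⟩
  have hprim := Complex.isPrimitiveRoot_exp N hN.ne'
  set ζ : 𝕋 := Circle.exp (2 * Real.pi / N) with hζdef
  have hζ : (ζ : ℂ) = Complex.exp (2 * Real.pi * Complex.I / N) := by
    rw [hζdef, Circle.coe_exp]
    congr 1
    push_cast
    ring
  have key : ∀ x : 𝕋, x ^ N = 1 → ∃ i : ℕ, x = ζ ^ i := by
    intro x hx
    have hxC : (x : ℂ) ^ N = 1 := by
      rw [← coe_pow, hx, Circle.coe_one]
    obtain ⟨i, _, hi⟩ := hprim.eq_pow_of_pow_eq_one hxC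
    refine ⟨i, Circle.coe_injective ?_⟩
    rw [coe_pow, hζ, hi]
  have hζN : ζ ^ N = 1 := by
    apply Circle.coe_injective
    rw [coe_pow, hζ, Circle.coe_one]
    exact hprim.pow_eq_one
  have hfζ : f ζ ^ N = 1 := by rw [← hset_pow hf, hζN, hset_one hf]
  obtain ⟨a, ha⟩ := key (f ζ) hfζ
  refine ⟨a, fun x hx => ?_⟩
  obtain ⟨i, hi⟩ := key x hx
  rw [hi, hset_pow hf, ha, ← pow_mul, mul_comm, pow_mul]

end Aux

namespace Aux
open Finset Function

lemma iterate_pow_rep {f : 𝕋 → 𝕋} {N : ℕ} {a : ℕ}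
    (ha : ∀ x : 𝕋, x ^ N = 1 → f x = x ^ a) :
    ∀ j, ∀ x : 𝕋, x ^ N = 1 → f^[j] x = x ^ a ^ j := by
  intro j
  induction j with
  | zero => intro x _; simp
  | succ j ih =>
      intro x hx
      have hfx : (x ^ a) ^ N = 1 := by
        rw [← pow_mul, mul_comm, pow_mul, hx, one_pow]
      rw [Function.iterate_succ_apply, ha x hx, ih _ hfx, ← pow_mul, ← pow_succ']

lemma stir_succ_succ (k j : ℕ) :
    stir (k + 1) (j + 1) = stir k j - (k : ℤ) * stir k (j + 1) := rfl

lemma stir_succ_zero (k : ℕ) : stir (k + 1) 0 = 0 := rfl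

lemma stir_of_lt : ∀ k j : ℕ, k < j → stir k j = 0 := by
  intro k
  induction k with
  | zero =>
      intro j hj
      match j, hj with
      | j + 1, _ => rfl
  | succ k ih =>
      intro j hj
      match j, hj with
      | j + 1, hj =>
          rw [stir_succ_succ, ih j (by omega), ih (j + 1) (by omega)]
          ring

lemma stir_sum (k : ℕ) (a : ℤ) :
    ∑ j ∈ range (k + 1), stir k j * a ^ j = (descPochhammer ℤ k).eval a := by
  induction k with
  | zero => simp [stir]
  | succ k ih =>
      rw [Finset.sum_range_succ', descPochhammer_succ_eval, ← ih]
      have expand : ∀ j ∈ range (k + 1),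
          stir (k + 1) (j + 1) * a ^ (j + 1)
            = stir k j * a ^ j * a - (k : ℤ) * (stir k (j + 1) * a ^ (j + 1)) := by
        intro j _
        rw [stir_succ_succ]
        ring
      rw [Finset.sum_congr rfl expand, Finset.sum_sub_distrib, ← Finset.sum_mul,
        ← Finset.mul_sum]
      have hB : ∑ j ∈ range (k + 1), stir k (j + 1) * a ^ (j + 1)
          = (∑ j ∈ range (k + 1), stir k j * a ^ j) - stir k 0 := by
        have h1 := Finset.sum_range_succ' (fun j => stir k j * a ^ j) (k + 1)
        rw [Finset.sum_range_succ, stir_of_lt k (k + 1) (lt_add_one k)] at h1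
        simp only [pow_zero, mul_one, zero_mul, add_zero] at h1
        linarith [h1]
      have hk0 : (k : ℤ) * stir k 0 = 0 := by
        cases k with
        | zero => simp
        | succ n => rw [stir_succ_zero]; ring
      rw [hB, stir_succ_zero]
      push_cast
      linear_combination hk0

lemma descPochhammer_eval_int (a : ℤ) (k : ℕ) :
    (descPochhammer ℤ k).eval a = (k.factorial : ℤ) * Ring.choose a k := by
  rw [Polynomial.eval_eq_smeval, Ring.descPochhammer_eq_factorial_smul_choose, nsmul_eq_mul]

def gfun (f : 𝕋 → 𝕋) (k : ℕ) : 𝕋 → 𝕋 := fun x => ∏ j ∈ Finset.Icc 1 k, f^[j] (x ^ stir k j)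

lemma gfun_hset {f : 𝕋 → 𝕋} (hf : f ∈ HSet) (k : ℕ) : gfun f k ∈ HSet := by
  intro x y
  unfold gfun
  rw [← Finset.prod_mul_distrib]
  refine Finset.prod_congr rfl fun j _ => ?_
  rw [mul_zpow]
  exact hset_iterate hf j _ _

lemma prod_zpow (x : 𝕋) (s : Finset ℕ) (c : ℕ → ℤ) :
    ∏ j ∈ s, x ^ c j = x ^ ∑ j ∈ s, c j := by
  induction s using Finset.cons_induction with
  | empty => simp
  | cons a s ha ih => rw [Finset.prod_cons, Finset.sum_cons, ih, zpow_add]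

lemma gfun_ker {f : 𝕋 → 𝕋} (hf : f ∈ HSet) {k : ℕ} (hk : 1 ≤ k) :
    ∀ x : 𝕋, x ^ k.factorial = 1 → gfun f k x = 1 := by
  obtain ⟨a, ha⟩ := exists_pow_rep hf k.factorial_pos
  intro x hx
  have hmem : ∀ s : ℤ, (x ^ s) ^ k.factorial = 1 := by
    intro s
    rw [← zpow_natCast (x ^ s), ← zpow_mul, mul_comm, zpow_mul, zpow_natCast, hx, one_zpow]
  have hstep : gfun f k x = ∏ j ∈ Finset.Icc 1 k, x ^ (stir k j * (a : ℤ) ^ j) := by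
    refine Finset.prod_congr rfl fun j _ => ?_
    rw [iterate_pow_rep ha j _ (hmem _), ← zpow_natCast (x ^ stir k j), ← zpow_mul]
    congr 1
  have hsum : ∑ j ∈ Finset.Icc 1 k, stir k j * (a : ℤ) ^ j
      = (k.factorial : ℤ) * Ring.choose (a : ℤ) k := by
    have hins : range (k + 1) = insert 0 (Finset.Icc 1 k) := by
      ext j; simp [Finset.mem_range, Finset.mem_Icc]; omega
    have h0 : stir k 0 = 0 := by
      obtain ⟨k', rfl⟩ := Nat.exists_eq_add_of_lt (Nat.lt_of_lt_of_le Nat.zero_lt_one hk)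
      exact stir_succ_zero k'
    have := stir_sum k (a : ℤ)
    rw [hins, Finset.sum_insert (by simp), h0, zero_mul, zero_add] at this
    rw [this, descPochhammer_eval_int]
  rw [hstep, prod_zpow, hsum, zpow_mul, zpow_natCast, hx, one_zpow]

end Aux

namespace Aux

def root (y : 𝕋) (n : ℕ) : 𝕋 := Circle.exp (Complex.arg (y : ℂ) / n)

lemma root_pow (y : 𝕋) {n : ℕ} (hn : 0 < n) : root y n ^ n = y := by
  rw [root, exp_pow, mul_div_cancel₀ _ (by exact_mod_cast hn.ne')]
  exact Circle.exp_arg y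

lemma gfun_congr {f : 𝕋 → 𝕋} (hf : f ∈ HSet) {k : ℕ} (hk : 1 ≤ k) {u v : 𝕋}
    (huv : u ^ k.factorial = v ^ k.factorial) : gfun f k u = gfun f k v := by
  have hker : (u * v⁻¹) ^ k.factorial = 1 := by
    rw [mul_pow, inv_pow, huv, mul_inv_cancel]
  have h2 := gfun_hset hf k (u * v⁻¹) v
  rw [inv_mul_cancel_right, gfun_ker hf hk _ hker, one_mul] at h2
  exact h2

def extHom (f : 𝕋 → 𝕋) (k : ℕ) : 𝕋 → 𝕋 := fun y => gfun f k (root y k.factorial)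

lemma ext_spec {f : 𝕋 → 𝕋} (hf : f ∈ HSet) {k : ℕ} (hk : 1 ≤ k) (x : 𝕋) :
    extHom f k (x ^ k.factorial) = gfun f k x :=
  gfun_congr hf hk (root_pow _ k.factorial_pos)

lemma ext_hset {f : 𝕋 → 𝕋} (hf : f ∈ HSet) {k : ℕ} (hk : 1 ≤ k) :
    extHom f k ∈ HSet := by
  intro y z
  have h1 : (root y k.factorial * root z k.factorial) ^ k.factorial = y * z := by
    rw [mul_pow, root_pow _ k.factorial_pos, root_pow _ k.factorial_pos]
  calc extHom f k (y * z) = gfun f k (root y k.factorial * root z k.factorial) := by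
        rw [extHom, gfun_congr hf hk ((root_pow _ k.factorial_pos).trans h1.symm)]
    _ = extHom f k y * extHom f k z := gfun_hset hf k _ _

end Aux

/-- The truncation map `ρ_m : 𝓗 → 𝓗_m` is surjective: every element of `𝓗_m`
extends to an element of `𝓗`. -/
theorem stmt2 (m : ℕ) (hm : 1 ≤ m) (ψ : Fin (m + 1) → 𝕋 → 𝕋) (hψ : ψ ∈ HFin (m + 1)) :
    ∃ φ ∈ Hcal, ∀ k : Fin (m + 1), φ (k : ℕ) = ψ k := by
  classical
  have h1lt : (1 : ℕ) < m + 1 := by omega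
  set f : 𝕋 → 𝕋 := ψ ⟨1, h1lt⟩ with hfdef
  have hfH : f ∈ HSet := hψ.1 _
  set φ : ℕ → 𝕋 → 𝕋 :=
    fun k => if h : k < m + 1 then ψ ⟨k, h⟩ else Aux.extHom f k with hφdef
  have hφlt : ∀ k (h : k < m + 1), φ k = ψ ⟨k, h⟩ := by
    intro k h; simp only [hφdef, dif_pos h]
  have hφge : ∀ k, ¬ k < m + 1 → φ k = Aux.extHom f k := by
    intro k h; simp only [hφdef, dif_neg h]
  have hφ1 : φ 1 = f := hφlt 1 h1lt
  refine ⟨φ, ⟨?_, ?_, ?_⟩, ?_⟩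
  · intro k
    by_cases h : k < m + 1
    · rw [hφlt k h]; exact hψ.1 _
    · rw [hφge k h]; exact Aux.ext_hset hfH (by omega)
  · rw [hφlt 0 (by omega)]
    exact hψ.2.1 ⟨0, by omega⟩ rfl
  · intro k hk x hx
    rw [hφ1]
    by_cases h : k < m + 1
    · rw [hφlt k h]
      exact hψ.2.2 ⟨k, h⟩ hk x hx
    · rw [hφge k h]
      exact Aux.ext_spec hfH (by omega : 1 ≤ k) x
  · intro k
    rw [hφlt (k : ℕ) k.isLt, Fin.eta]
end
end

section
/- Let m ∈ ℕ, let (φ_k)_{k=0}^{m} ∈ 𝓗_m, and let x_0 ∈ 𝕋 ∖ 𝕋_Q. Then {φ_{m+1}(x_0) : φ_{m+1} ∈ H(𝕋) such that (φ_k)_{k=0}^{m+1} ∈ 𝓗_{m+1}} = 𝕋; that is, for every y ∈ 𝕋 there exists φ_{m+1} ∈ H(𝕋) with φ_{m+1}(x_0) = y extending the given sequence to an element of 𝓗_{m+1}. -/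
noncomputable section

/-! ### Auxiliary results -/

lemma stir_eq_zero : ∀ k j : ℕ, k < j → stir k j = 0
  | 0, _+1, _ => rfl
  | k+1, j+1, h => by
      have h1 : k < j := by omega
      have h2 : k < j + 1 := by omega
      simp [stir, stir_eq_zero k j h1, stir_eq_zero k (j+1) h2]

lemma stir_sum (k : ℕ) (a : ℤ) :
    ∑ j ∈ Finset.range (k+1), stir k j * a^j = (descPochhammer ℤ k).eval a := by
  induction k with
  | zero => simp [stir]
  | succ k ih =>
    have h0 : (k:ℤ) * stir k 0 = 0 := by cases k <;> simp [stir]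
    have hz : stir k (k+1) = 0 := stir_eq_zero k (k+1) (by omega)
    have hshift : ∑ i ∈ Finset.range (k+1), stir k (i+1) * a^(i+1)
        = (∑ i ∈ Finset.range (k+1), stir k i * a^i) - stir k 0 := by
      have := Finset.sum_range_succ' (fun i => stir k i * a^i) (k+1)
      rw [Finset.sum_range_succ (fun i => stir k i * a^i) (k+1)] at this
      simp only [hz, zero_mul, add_zero, pow_zero, mul_one] at this
      omega
    rw [descPochhammer_succ_right, Polynomial.eval_mul, ← ih,
      Finset.sum_range_succ' (fun j => stir (k+1) j * a^j) (k+1)]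
    simp only [stir, pow_zero, mul_one]
    have expand : ∀ i ∈ Finset.range (k+1),
        (stir k i - (k:ℤ) * stir k (i+1)) * a^(i+1)
          = a * (stir k i * a^i) - (k:ℤ) * (stir k (i+1) * a^(i+1)) := by
      intro i _; ring
    rw [Finset.sum_congr rfl expand, Finset.sum_sub_distrib, ← Finset.mul_sum, ← Finset.mul_sum,
      hshift]
    simp only [Polynomial.eval_sub, Polynomial.eval_X, Polynomial.eval_natCast]
    linear_combination h0

lemma circle_exp_zpow (t : ℝ) (k : ℤ) : Circle.exp t ^ k = Circle.exp (k * t) := by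
  have h2 : Circle.expHom ((k:ℤ) • t) = (k:ℤ) • Circle.expHom t := map_zsmul _ _ _
  have h3 : ((k:ℤ) • t : ℝ) = (k : ℝ) * t := by simp [zsmul_eq_mul]
  rw [← h3]
  calc Circle.exp t ^ k = Additive.toMul ((k:ℤ) • Circle.expHom t) := rfl
    _ = Additive.toMul (Circle.expHom ((k:ℤ) • t)) := by rw [h2]
    _ = Circle.exp ((k:ℤ) • t) := rfl

lemma circle_zpow_surj (n : ℤ) (hn : n ≠ 0) : Function.Surjective (fun z : 𝕋 => z ^ n) := by
  intro z
  refine ⟨Circle.exp (Complex.arg z / n), ?_⟩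
  simp only [circle_exp_zpow]
  rw [mul_div_cancel₀]
  · exact Circle.exp_arg z
  · exact_mod_cast hn

instance : DivisibleBy (Additive 𝕋) ℤ :=
  divisibleByOfSMulRightSurj _ _ (fun {n} hn a => by
    obtain ⟨w, hw⟩ := circle_zpow_surj n hn (Additive.toMul a)
    exact ⟨Additive.ofMul w, by simpa [← ofMul_zpow] using congrArg Additive.ofMul hw⟩)

/-- Extension of homomorphisms into the circle along subgroup inclusions. -/
lemma exists_extension {G : Type} [CommGroup G] (B : Subgroup G) (h : ↥B →* 𝕋) :
    ∃ H : G → 𝕋, (∀ x y, H (x*y) = H x * H y) ∧ ∀ b : ↥B, H ↑b = h b := by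
  have inj : Module.Injective ℤ (Additive 𝕋) := (Module.Baer.of_divisible _).injective
  let BA : AddSubgroup (Additive G) := Subgroup.toAddSubgroup B
  let f : ↥BA →ₗ[ℤ] Additive G := (AddSubgroup.subtype BA).toIntLinearMap
  let g0 : ↥BA →+ Additive 𝕋 := AddMonoidHom.mk'
    (fun x => Additive.ofMul (h ⟨Additive.toMul x.1, x.2⟩))
    (by
      rintro ⟨x, hx⟩ ⟨y, hy⟩
      simp only
      rw [← ofMul_mul]
      congr 1
      exact map_mul h ⟨Additive.toMul x, hx⟩ ⟨Additive.toMul y, hy⟩)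
  obtain ⟨H, hH⟩ := inj.out f (by exact Subtype.val_injective) g0.toIntLinearMap
  refine ⟨fun x => Additive.toMul (H (Additive.ofMul x)), fun x y => ?_, fun b => ?_⟩
  · rw [← toMul_add, ← map_add]; rfl
  · exact congrArg Additive.toMul (hH ⟨Additive.ofMul (b : G), b.2⟩)

section gfun
variable (Ψ : 𝕋 →* 𝕋)

lemma iter_map_mul (j : ℕ) (x y : 𝕋) : (⇑Ψ)^[j] (x * y) = (⇑Ψ)^[j] x * (⇑Ψ)^[j] y := by
  induction j generalizing x y with
  | zero => rfl
  | succ j ih => simp only [Function.iterate_succ_apply, map_mul, ih]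

/-- the product homomorphism `g` appearing on the right side of (H.m). -/
def gfunHom (m : ℕ) : 𝕋 →* 𝕋 :=
  MonoidHom.mk' (fun x => ∏ j ∈ Finset.Icc 1 (m+1), (⇑Ψ)^[j] (x ^ stir (m+1) j))
    (by
      intro x y
      rw [← Finset.prod_mul_distrib]
      refine Finset.prod_congr rfl fun j _ => ?_
      rw [mul_zpow, iter_map_mul])

lemma zpow_sum' (x : 𝕋) (s : Finset ℕ) (f : ℕ → ℤ) :
    x ^ (∑ j ∈ s, f j) = ∏ j ∈ s, x ^ f j := by
  classical
  induction s using Finset.induction with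
  | empty => simp
  | insert _ _ hj ih => rw [Finset.sum_insert hj, Finset.prod_insert hj, zpow_add, ih]

lemma gfunHom_vanish (m : ℕ) (x : 𝕋) (hx : x ^ (Nat.factorial (m+1)) = 1) :
    gfunHom Ψ m x = 1 := by
  set M := Nat.factorial (m+1) with hMdef
  have hM : 0 < M := Nat.factorial_pos _
  set G : Subgroup 𝕋 := (powMonoidHom M : 𝕋 →* 𝕋).ker with hGdef
  have memG : ∀ z : 𝕋, z ∈ G ↔ z ^ M = 1 := fun z => Iff.rfl
  have hfin : Finite G := by
    have hfin' : {w : ℂ | w ^ M = 1}.Finite := by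
      have hp : (Polynomial.X ^ M - Polynomial.C 1 : Polynomial ℂ) ≠ 0 := by
        intro hc
        have := congrArg (Polynomial.coeff · M) hc
        simp [Polynomial.coeff_X_pow, Polynomial.coeff_one, hM.ne'] at this
      refine Set.Finite.subset (Polynomial.finite_setOf_isRoot hp) ?_
      intro w hw
      simp [Polynomial.IsRoot, sub_eq_zero, hw.out]
    have : Finite {w : ℂ | w ^ M = 1} := hfin'.to_subtype
    refine Finite.of_injective (fun z => (⟨(z : 𝕋), ?_⟩ : {w : ℂ | w ^ M = 1})) ?_
    · have h2 := (memG _).mp z.2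
      show (Circle.coeHom (z : 𝕋)) ^ M = 1
      rw [← map_pow, h2, map_one]
    · intro a b hab
      have h4 := congrArg Subtype.val hab
      exact Subtype.ext (Subtype.ext h4)
  have hcyc : IsCyclic G :=
    isCyclic_of_subgroup_isDomain (R := ℂ) (Circle.coeHom.comp G.subtype)
      (fun a b hab => Subtype.ext (Subtype.ext hab))
  have hmapsto : ∀ z : 𝕋, z ∈ G → Ψ z ∈ G := by
    intro z hz
    rw [memG] at hz ⊢
    rw [← map_pow, hz, map_one]
  let σ : G →* G := MonoidHom.mk' (fun z => ⟨Ψ z, hmapsto z z.2⟩)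
    (by intro a b; apply Subtype.ext; exact map_mul Ψ _ _)
  obtain ⟨a, ha⟩ := MonoidHom.map_cyclic σ
  have iter_eq : ∀ (j : ℕ) (z : G), (⇑Ψ)^[j] (z : 𝕋) = (z : 𝕋) ^ (a ^ j) := by
    intro j
    induction j with
    | zero => intro z; simp
    | succ j ih =>
      intro z
      rw [Function.iterate_succ_apply]
      have : Ψ (z : 𝕋) = ((σ z : G) : 𝕋) := rfl
      rw [this, ih (σ z), ha z, SubgroupClass.coe_zpow, ← zpow_mul, ← pow_succ']
  have hxG : x ∈ G := (memG x).mpr hx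
  have hval : gfunHom Ψ m x = x ^ (∑ j ∈ Finset.Icc 1 (m+1), stir (m+1) j * a ^ j) := by
    rw [zpow_sum']
    show ∏ j ∈ Finset.Icc 1 (m+1), (⇑Ψ)^[j] (x ^ stir (m+1) j) = _
    refine Finset.prod_congr rfl fun j _ => ?_
    have hz : x ^ stir (m+1) j ∈ G := G.zpow_mem hxG _
    have h3 := iter_eq j ⟨x ^ stir (m+1) j, hz⟩
    simp only [Subgroup.coe_mk] at h3
    rw [h3, ← zpow_mul]
  have hsum : ∑ j ∈ Finset.Icc 1 (m+1), stir (m+1) j * a ^ j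
      = (descPochhammer ℤ (m+1)).eval a := by
    rw [← stir_sum]
    have hins : Finset.range (m+1+1) = insert 0 (Finset.Icc 1 (m+1)) := by
      ext i; simp only [Finset.mem_range, Finset.mem_insert, Finset.mem_Icc]; omega
    rw [hins, Finset.sum_insert (by simp)]
    simp [stir]
  have heval : (descPochhammer ℤ (m+1)).eval a = (M:ℤ) * Ring.choose a (m+1) := by
    rw [Polynomial.eval_eq_smeval, Ring.descPochhammer_eq_factorial_smul_choose]
    simp [hMdef, nsmul_eq_mul]
  rw [hval, hsum, heval, zpow_mul, zpow_natCast, hx, one_zpow]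

end gfun

/-- Extension lemma: given `(φ_k)_{k=0}^m ∈ 𝓗_m` and `x₀ ∈ 𝕋 ∖ 𝕋_Q`, the set of
possible values `φ_{m+1}(x₀)` over all extensions to `𝓗_{m+1}` is all of 𝕋. -/
theorem stmt3 (m : ℕ) (hm : 1 ≤ m) (ψ : Fin (m + 1) → 𝕋 → 𝕋) (hψ : ψ ∈ HFin (m + 1))
    (x0 : 𝕋) (hx0 : x0 ∉ TQ) :
    {y : 𝕋 | ∃ χ ∈ HFin (m + 2),
        (∀ k : Fin (m + 1), χ (Fin.castSucc k) = ψ k) ∧ χ (Fin.last (m + 1)) x0 = y} =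
      Set.univ := by
  obtain ⟨hhom, hzero, hcond⟩ := hψ
  have h1m : 1 < m + 1 := by omega
  set ψ1 : 𝕋 → 𝕋 := ψ ⟨1, h1m⟩ with hψ1def
  let Ψ : 𝕋 →* 𝕋 := MonoidHom.mk' ψ1 (hhom ⟨1, h1m⟩)
  set gf : 𝕋 →* 𝕋 := gfunHom Ψ m with hgfdef
  set M := Nat.factorial (m+1) with hMdef
  have hM : 0 < M := Nat.factorial_pos _
  -- roots
  have hroot : ∀ t : 𝕋, ∃ r : 𝕋, r ^ M = t := by
    intro t
    obtain ⟨r, hr⟩ := circle_zpow_surj (M:ℤ) (by exact_mod_cast hM.ne') t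
    exact ⟨r, by rw [← zpow_natCast]; exact hr⟩
  set rt : 𝕋 → 𝕋 := fun t => (hroot t).choose with hrtdef
  have hrt : ∀ t, (rt t) ^ M = t := fun t => (hroot t).choose_spec
  have gf_eq : ∀ u w : 𝕋, u ^ M = w ^ M → gf u = gf w := by
    intro u w huw
    have h1 : (u * w⁻¹) ^ M = 1 := by
      rw [mul_pow, inv_pow, huw, mul_inv_cancel]
    have h2 := gfunHom_vanish Ψ m _ h1
    calc gf u = gf (u * w⁻¹ * w) := by rw [inv_mul_cancel_right]
      _ = gf (u * w⁻¹) * gf w := map_mul gf _ _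
      _ = gf w := by rw [← hgfdef] at h2; rw [h2, one_mul]
  -- the torsion subgroup
  set Q : Subgroup 𝕋 := CommGroup.torsion 𝕋 with hQdef
  have hTQ : ∀ x : 𝕋, x ∈ TQ ↔ x ∈ Q := by
    intro x
    rw [hQdef, CommGroup.mem_torsion, isOfFinOrder_iff_pow_eq_one]
    exact Iff.rfl
  let h : ↥Q →* 𝕋 := MonoidHom.mk' (fun t => gf (rt ↑t))
    (by
      intro t1 t2
      have he : (rt ↑(t1*t2)) ^ M = (rt ↑t1 * rt ↑t2) ^ M := by
        rw [hrt, mul_pow, hrt, hrt]; rfl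
      show gf (rt ↑(t1*t2)) = gf (rt ↑t1) * gf (rt ↑t2)
      rw [gf_eq _ _ he, map_mul])
  obtain ⟨H1, hH1mul, hH1⟩ := exists_extension Q h
  -- the quotient
  let π : 𝕋 →* (𝕋 ⧸ Q) := QuotientGroup.mk' Q
  have hq : ¬IsOfFinOrder (π x0) := by
    intro hq
    obtain ⟨n, hn, hqn⟩ := isOfFinOrder_iff_pow_eq_one.mp hq
    have hmem : x0 ^ n ∈ Q := by
      rw [← map_pow π x0 n] at hqn
      exact (QuotientGroup.eq_one_iff (x0 ^ n)).mp hqn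
    have : IsOfFinOrder x0 := (CommGroup.mem_torsion _ |>.mp hmem).of_pow hn.ne'
    exact hx0 ((hTQ x0).mpr ((CommGroup.mem_torsion _).mpr this))
  have zinj : Function.Injective (fun n : ℤ => (π x0) ^ n) :=
    injective_zpow_iff_not_isOfFinOrder.mpr hq
  set B2 : Subgroup (𝕋 ⧸ Q) := Subgroup.zpowers (π x0) with hB2def
  have ex : ∀ b : ↥B2, ∃ n : ℤ, (π x0) ^ n = ↑b := fun b => Subgroup.mem_zpowers_iff.mp b.2
  apply Set.eq_univ_of_forall
  intro y
  -- value correction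
  set v : 𝕋 := y * (H1 x0)⁻¹ with hvdef
  let c0 : ↥B2 →* 𝕋 := MonoidHom.mk' (fun b => v ^ (ex b).choose)
    (by
      intro b1 b2
      have h1 := (ex b1).choose_spec
      have h2 := (ex b2).choose_spec
      have h12 := (ex (b1*b2)).choose_spec
      have he : (fun n : ℤ => (π x0) ^ n) ((ex (b1*b2)).choose)
          = (fun n : ℤ => (π x0) ^ n) ((ex b1).choose + (ex b2).choose) := by
        show (π x0) ^ ((ex (b1*b2)).choose) = (π x0) ^ ((ex b1).choose + (ex b2).choose)
        rw [h12, zpow_add, h1, h2]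
        rfl
      show v ^ ((ex (b1*b2)).choose) = v ^ ((ex b1).choose) * v ^ ((ex b2).choose)
      rw [zinj he, zpow_add])
  obtain ⟨C1, hC1mul, hC1⟩ := exists_extension B2 c0
  have hC1one : C1 1 = 1 := by
    have := hC1 1
    simpa using this
  have hCq : C1 (π x0) = v := by
    have hqmem : π x0 ∈ B2 := Subgroup.mem_zpowers _
    have h5 : C1 (π x0) = v ^ (ex ⟨π x0, hqmem⟩).choose := hC1 ⟨π x0, hqmem⟩
    have h6 : (ex ⟨π x0, hqmem⟩).choose = 1 := by
      apply zinj
      show (π x0) ^ _ = (π x0) ^ (1:ℤ)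
      rw [(ex ⟨π x0, hqmem⟩).choose_spec, zpow_one]
    rw [h5, h6, zpow_one]
  set fnew : 𝕋 → 𝕋 := fun x => H1 x * C1 (π x) with hfnewdef
  have hfnewmul : ∀ x z : 𝕋, fnew (x * z) = fnew x * fnew z := by
    intro x z
    simp only [hfnewdef, map_mul, hH1mul, hC1mul]
    ac_rfl
  -- key values
  have hQpow : ∀ x ∈ TQ, x ^ M ∈ Q := by
    intro x hx
    exact (CommGroup.mem_torsion _).mpr
      (((CommGroup.mem_torsion _).mp ((hTQ x).mp hx)).pow)
  have hH1x : ∀ x ∈ TQ, H1 (x ^ M) = gf x := by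
    intro x hx
    have h5 : H1 (x ^ M) = gf (rt (x ^ M)) := hH1 ⟨x ^ M, hQpow x hx⟩
    rw [h5]
    exact gf_eq _ _ (hrt (x ^ M))
  have hC1x : ∀ x ∈ TQ, C1 (π (x ^ M)) = 1 := by
    intro x hx
    have : π (x ^ M) = 1 := (QuotientGroup.eq_one_iff _).mpr (hQpow x hx)
    rw [this, hC1one]
  -- the extension
  refine ⟨Fin.snoc ψ fnew, ⟨?_, ?_, ?_⟩, fun k => Fin.snoc_castSucc _ _ _, ?_⟩
  · -- homomorphisms
    intro k
    refine Fin.lastCases ?_ ?_ k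
    · rw [Fin.snoc_last]; exact hfnewmul
    · intro i; rw [Fin.snoc_castSucc]; exact hhom i
  · -- zero condition
    intro k
    refine Fin.lastCases ?_ ?_ k
    · intro hk; simp [Fin.val_last] at hk
    · intro i hk
      rw [Fin.snoc_castSucc]
      exact hzero i (by simpa using hk)
  · -- main condition
    intro k
    refine Fin.lastCases ?_ ?_ k
    · intro hk x hx
      have hmk : ∀ (p : (1:ℕ) < m+2), (⟨1, p⟩ : Fin (m+2)) = Fin.castSucc ⟨1, h1m⟩ := by
        intro p; apply Fin.ext; simp
      simp only [Fin.val_last, Fin.snoc_last]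
      rw [hmk, Fin.snoc_castSucc]
      have hL : fnew (x ^ Nat.factorial (m+1)) = gf x := by
        rw [hfnewdef]
        show H1 (x ^ M) * C1 (π (x ^ M)) = gf x
        rw [hH1x x hx, hC1x x hx, mul_one]
      rw [hL]
      rfl
    · intro i hk x hx
      have hk' : 1 ≤ (i : ℕ) := by simpa using hk
      have hmk : ∀ (p : (1:ℕ) < m+2),
          (⟨1, p⟩ : Fin (m+2)) = Fin.castSucc ⟨1, lt_of_le_of_lt hk' i.isLt⟩ := by
        intro p; apply Fin.ext; simp
      simp only [Fin.coe_castSucc]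
      rw [Fin.snoc_castSucc, hmk, Fin.snoc_castSucc]
      exact hcond i hk' x hx
  · -- evaluation at x0
    rw [Fin.snoc_last]
    show H1 x0 * C1 (π x0) = y
    rw [hCq, hvdef, mul_comm, inv_mul_cancel_right]
end
end

section
/- The topological centre of the enveloping semigroup E(𝕋^{ℤ≥0}, t) is exactly {t^n : n ∈ ℤ}; equivalently, an element φ ∈ (𝓗, ⋆) has continuous left translation ψ ↦ φ ⋆ ψ on 𝓗 if and only if φ = ñ for some n ∈ ℤ. -/
noncomputable section

/- ### Auxiliary lemmas -/

open Real Filter Topology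

section StirAux

lemma stir_zero_right : ∀ k : ℕ, k ≠ 0 → stir k 0 = 0
  | _ + 1, _ => rfl

lemma stir_eq_zero_of_lt : ∀ {k j : ℕ}, k < j → stir k j = 0
  | 0, _ + 1, _ => rfl
  | k + 1, j + 1, h => by
    rw [stir]
    rw [stir_eq_zero_of_lt (by omega), stir_eq_zero_of_lt (by omega)]
    ring

lemma sum_stir_mul_pow (k : ℕ) (n : ℤ) :
    ∑ j ∈ Finset.range (k + 1), stir k j * n ^ j = (descPochhammer ℤ k).eval n := by
  induction k with
  | zero => simp [stir]
  | succ k ih =>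
    have hk0 : (k : ℤ) * stir k 0 = 0 := by
      rcases k with _ | k
      · simp
      · rw [stir_zero_right _ (Nat.succ_ne_zero k)]; ring
    have htop : ∑ j ∈ Finset.range (k + 2), stir k j * n ^ j
        = ∑ j ∈ Finset.range (k + 1), stir k j * n ^ j := by
      rw [Finset.sum_range_succ, stir_eq_zero_of_lt (Nat.lt_succ_self k)]; ring
    have hshift : ∑ j ∈ Finset.range (k + 1), stir k (j + 1) * n ^ (j + 1)
        = (∑ j ∈ Finset.range (k + 1), stir k j * n ^ j) - stir k 0 := by
      have h := Finset.sum_range_succ' (fun j => stir k j * n ^ j) (k + 1)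
      rw [htop] at h
      simp only [pow_zero, mul_one] at h
      linarith
    rw [descPochhammer_succ_eval, ← ih,
      Finset.sum_range_succ' (fun j => stir (k + 1) j * n ^ j) (k + 1)]
    have h1 : ∀ j, stir (k + 1) (j + 1) = stir k j - (k : ℤ) * stir k (j + 1) := fun j => rfl
    have h0 : stir (k + 1) 0 = 0 := rfl
    simp only [h1, h0, pow_zero, mul_one, add_zero, sub_mul]
    rw [Finset.sum_sub_distrib]
    have e1 : ∑ j ∈ Finset.range (k + 1), stir k j * n ^ (j + 1)
        = (∑ j ∈ Finset.range (k + 1), stir k j * n ^ j) * n := by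
      rw [Finset.sum_mul]; exact Finset.sum_congr rfl fun j _ => by ring
    have e2 : ∑ j ∈ Finset.range (k + 1), (k : ℤ) * stir k (j + 1) * n ^ (j + 1)
        = (k : ℤ) * ((∑ j ∈ Finset.range (k + 1), stir k j * n ^ j) - stir k 0) := by
      rw [← hshift, Finset.mul_sum]
      exact Finset.sum_congr rfl fun j _ => by ring
    rw [e1, e2]
    nlinarith [hk0]

lemma key_stir (k : ℕ) (hk : 1 ≤ k) (n : ℤ) :
    ∑ j ∈ Finset.Icc 1 k, stir k j * n ^ j = (Nat.factorial k : ℤ) * gchoose n k := by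
  have h1 : ∑ j ∈ Finset.Icc 1 k, stir k j * n ^ j
      = ∑ j ∈ Finset.range (k + 1), stir k j * n ^ j := by
    have hins : Finset.range (k + 1) = insert 0 (Finset.Icc 1 k) := by
      ext j; simp; omega
    rw [hins, Finset.sum_insert (by simp), stir_zero_right _ (by omega)]
    ring
  rw [h1, sum_stir_mul_pow]
  have h2 := Ring.descPochhammer_eq_factorial_smul_choose (R := ℤ) n k
  rw [Polynomial.eval_eq_smeval, h2, nsmul_eq_mul]
  rfl

end StirAux

section CircleAux

lemma exp_zpow (r : ℝ) (m : ℤ) : Circle.exp r ^ m = Circle.exp (m * r) := by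
  have h := map_zsmul Circle.expHom m r
  simp only [zsmul_eq_mul] at h
  have h2 : Circle.expHom (m * r) = Additive.ofMul (Circle.exp (m * r)) := rfl
  have h3 : Circle.expHom r = Additive.ofMul (Circle.exp r) := rfl
  rw [h2, h3, ← ofMul_zpow] at h
  exact (Additive.ofMul.injective h).symm

lemma exp_npow (r : ℝ) (m : ℕ) : Circle.exp r ^ m = Circle.exp (m * r) := by
  have := exp_zpow r m
  rw [zpow_natCast] at this
  simpa using this

lemma x0_nontorsion (d : ℤ) (h : Circle.exp 1 ^ d = 1) : d = 0 := by
  rw [exp_zpow, mul_one, Circle.exp_eq_one] at h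
  obtain ⟨nn, hn⟩ := h
  rcases eq_or_ne nn 0 with h0 | h0
  · subst h0
    simpa using hn
  · exfalso
    have hpi : Real.pi = (d : ℝ) / (2 * nn) := by
      field_simp at hn ⊢
      push_cast
      linarith
    have h1 : Irrational ((d : ℝ) / (2 * nn)) := hpi ▸ irrational_pi
    have h2 : ¬ Irrational ((d : ℝ) / (2 * nn)) := by
      rw [show ((d:ℝ) / (2 * nn)) = ((d : ℚ) / (2 * (nn:ℚ)) : ℚ) by push_cast; ring]
      exact Rat.not_irrational _
    tauto

lemma eq_zero_of_torsion_zpow (d : ℤ) (h : ∀ x ∈ TQ, x ^ d = 1) : d = 0 := by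
  set N : ℕ := d.natAbs + 1 with hN
  have hmem : Circle.exp (2 * π / N) ∈ TQ := by
    refine ⟨N, Nat.succ_pos _, ?_⟩
    rw [exp_npow]
    rw [show (N : ℝ) * (2 * π / N) = 2 * π by field_simp [show (N:ℝ) ≠ 0 by positivity]]
    exact Circle.exp_two_pi
  have hd := h _ hmem
  rw [exp_zpow, Circle.exp_eq_one] at hd
  obtain ⟨m, hm⟩ := hd
  have hπ : (0:ℝ) < π := Real.pi_pos
  have hr : (d : ℝ) = m * N := by
    have hNne : (N : ℝ) ≠ 0 := by positivity
    field_simp at hm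
    nlinarith [hm]
  have hdZ : d = m * (N : ℤ) := by
    have h2 : ((m * (N : ℤ) : ℤ) : ℝ) = (d : ℝ) := by
      rw [Int.cast_mul, Int.cast_natCast]; linarith [hr]
    exact (Int.cast_injective h2).symm
  have habs : d.natAbs = m.natAbs * N := by
    rw [hdZ, Int.natAbs_mul, Int.natAbs_natCast]
  have hlt : d.natAbs < N := by omega
  rcases Nat.eq_zero_or_pos m.natAbs with h0 | h0
  · rw [h0, zero_mul] at habs; omega
  · exfalso
    have : N ≤ m.natAbs * N := Nat.le_mul_of_pos_left N h0
    omega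

/-- exp α = exp β with |α - β| < 2π forces α = β -/
lemma exp_inj_window {α β : ℝ} (h : Circle.exp α = Circle.exp β) (hw : |α - β| < 2 * π) :
    α = β := by
  obtain ⟨m, hm⟩ := Circle.exp_eq_exp.mp h
  have hπ := Real.pi_pos
  rcases eq_or_ne m 0 with h0 | h0
  · rw [h0] at hm; simpa using hm
  · exfalso
    have h1 : (1 : ℝ) ≤ |(m : ℝ)| := by
      rw [← Int.cast_abs]
      exact_mod_cast Int.one_le_abs h0
    have : |α - β| = |(m : ℝ)| * (2 * π) := by
      rw [hm]; rw [show β + m * (2*π) - β = m * (2*π) by ring, abs_mul,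
        abs_of_pos (show (0:ℝ) < 2 * π by linarith)]
    nlinarith

/-- Any continuous homomorphism `ℝ → 𝕋` is `θ ↦ exp (c θ)`. -/
lemma char_real (g : ℝ → 𝕋) (hc : Continuous g) (hadd : ∀ a b, g (a + b) = g a * g b) :
    ∃ c : ℝ, ∀ θ, g θ = Circle.exp (c * θ) := by
  have hπ := Real.pi_pos
  have g0 : g 0 = 1 := by
    have := hadd 0 0
    rw [add_zero] at this
    exact (left_eq_mul.mp this)
  have gzpow : ∀ (m : ℤ) (θ : ℝ), g (m * θ) = g θ ^ m := by
    intro m θ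
    have h := map_zsmul (AddMonoidHom.mk' (fun θ => Additive.ofMul (g θ)) hadd) m θ
    simp only [AddMonoidHom.mk'_apply, zsmul_eq_mul] at h
    have h' : Additive.ofMul (g (m * θ)) = Additive.ofMul (g θ ^ m) := by
      rw [ofMul_zpow]; exact h
    exact Additive.ofMul.injective h'
  obtain ⟨ε, hε, hball⟩ : ∃ ε > 0, ∀ θ : ℝ, |θ| < ε → 0 < ((g θ : ℂ)).re := by
    have hopen : IsOpen {θ : ℝ | 0 < ((g θ : ℂ)).re} :=
      isOpen_lt continuous_const (Complex.continuous_re.comp (continuous_subtype_val.comp hc))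
    have hmem : (0:ℝ) ∈ {θ : ℝ | 0 < ((g θ : ℂ)).re} := by
      simp [g0, Circle.coe_one]
    obtain ⟨ε, hε, hb⟩ := Metric.isOpen_iff.mp hopen 0 hmem
    exact ⟨ε, hε, fun θ hθ => hb (by simpa [Real.dist_eq] using hθ)⟩
  obtain ⟨δ, hδpos, hsmall⟩ : ∃ δ : ℝ, 0 < δ ∧ ∀ n : ℕ, |δ / 2 ^ n| < ε := by
    refine ⟨ε / 2, by positivity, fun n => ?_⟩
    have h1 : (1:ℝ) ≤ 2 ^ n := one_le_pow₀ (by norm_num)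
    rw [abs_of_pos (by positivity), div_lt_iff₀ (by positivity)]
    nlinarith
  set a : ℕ → ℝ := fun n => Complex.arg ((g (δ / 2 ^ n) : ℂ)) with ha
  have hexp : ∀ n, Circle.exp (a n) = g (δ / 2 ^ n) := fun n => Circle.exp_arg _
  have habs : ∀ n, |a n| < π / 2 := by
    intro n
    have := hball _ (hsmall n)
    exact Complex.abs_arg_lt_pi_div_two_iff.mpr (Or.inl this)
  have hhalf : ∀ n, a (n + 1) = a n / 2 := by
    intro n
    have hsq : g (δ / 2 ^ (n+1)) * g (δ / 2 ^ (n+1)) = g (δ / 2 ^ n) := by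
      rw [← hadd]
      congr 1
      field_simp
      ring
    have he : Circle.exp (a (n+1) + a (n+1)) = Circle.exp (a n) := by
      rw [Circle.exp_add, hexp, hexp, hsq]
    have hw : |(a (n+1) + a (n+1)) - a n| < 2 * π := by
      have h1 := habs (n+1); have h2 := habs n
      rw [abs_lt] at h1 h2 ⊢
      constructor <;> nlinarith
    have := exp_inj_window he hw
    linarith
  have haval : ∀ n, a n = a 0 / 2 ^ n := by
    intro n
    induction n with
    | zero => simp
    | succ n ih => rw [hhalf, ih, pow_succ]; ring
  set c : ℝ := a 0 / δ with hcdef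
  have hgd : ∀ n : ℕ, g (δ / 2 ^ n) = Circle.exp (c * (δ / 2 ^ n)) := by
    intro n
    rw [← hexp n, haval]
    congr 1
    rw [hcdef]
    field_simp
  have hgk : ∀ (m : ℤ) (n : ℕ), g (m * (δ / 2 ^ n)) = Circle.exp (c * (m * (δ / 2 ^ n))) := by
    intro m n
    rw [gzpow, hgd, exp_zpow]
    congr 1
    ring
  refine ⟨c, fun θ => ?_⟩
  set t : ℕ → ℝ := fun n => (round (θ * 2 ^ n / δ) : ℝ) * (δ / 2 ^ n) with ht
  have htend : Tendsto t atTop (𝓝 θ) := by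
    rw [tendsto_iff_dist_tendsto_zero]
    have hb : ∀ n : ℕ, dist (t n) θ ≤ δ / 2 ^ n := by
      intro n
      have h2n : (0:ℝ) < 2 ^ n := by positivity
      rw [Real.dist_eq, ht]
      have heq : (round (θ * 2 ^ n / δ) : ℝ) * (δ / 2 ^ n) - θ
          = ((round (θ * 2 ^ n / δ) : ℝ) - θ * 2 ^ n / δ) * (δ / 2 ^ n) := by
        field_simp
      rw [heq, abs_mul, abs_of_pos (show (0:ℝ) < δ / 2 ^ n from by positivity)]
      have h1 : |(round (θ * 2 ^ n / δ) : ℝ) - θ * 2 ^ n / δ| ≤ 1 / 2 := by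
        rw [abs_sub_comm]
        exact abs_sub_round _
      calc |(round (θ * 2 ^ n / δ) : ℝ) - θ * 2 ^ n / δ| * (δ / 2 ^ n)
          ≤ (1/2) * (δ / 2 ^ n) := by
            apply mul_le_mul_of_nonneg_right h1 (by positivity)
        _ ≤ δ / 2 ^ n := by
            have hnn : (0:ℝ) ≤ δ / 2 ^ n := by positivity
            linarith
    have hz : Tendsto (fun n : ℕ => δ / 2 ^ n) atTop (𝓝 0) := by
      simp only [div_eq_mul_inv, ← inv_pow]
      simpa using tendsto_const_nhds.mul (tendsto_pow_atTop_nhds_zero_of_lt_one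
        (by norm_num : (0:ℝ) ≤ 2⁻¹) (by norm_num : (2:ℝ)⁻¹ < 1))
    exact squeeze_zero (fun n => dist_nonneg) hb hz
  have h1 : Tendsto (fun n => g (t n)) atTop (𝓝 (g θ)) :=
    (hc.continuousAt.tendsto).comp htend
  have h2 : Tendsto (fun n => g (t n)) atTop (𝓝 (Circle.exp (c * θ))) := by
    have heq : ∀ n, g (t n) = Circle.exp (c * t n) := fun n => hgk _ n
    simp only [heq]
    exact ((Circle.exp.continuous.comp
      (continuous_const.mul continuous_id)).continuousAt.tendsto).comp htend
  exact tendsto_nhds_unique h1 h2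

/-- A `ℚ`-valued additive character of `𝕋` taking the value 1 at `Circle.exp 1`. -/
lemma exists_q : ∃ q : Additive 𝕋 →+ ℚ, q (Additive.ofMul (Circle.exp 1)) = 1 := by
  have hinj : Function.Injective (zmultiplesHom (Additive 𝕋) (Additive.ofMul (Circle.exp 1))) := by
    intro a b hab
    simp only [zmultiplesHom_apply] at hab
    have h0 : (a - b) • (Additive.ofMul (Circle.exp 1)) = 0 := by
      simp [sub_zsmul, hab]
    have h1 : Circle.exp 1 ^ (a - b) = 1 := by
      have := congrArg Additive.toMul h0
      simpa [← ofMul_zpow] using this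
    have := x0_nontorsion _ h1
    omega
  obtain ⟨q, hq⟩ := Module.Baer.extension_property_addMonoidHom
    (Module.Baer.of_divisible ℚ)
    (zmultiplesHom (Additive 𝕋) (Additive.ofMul (Circle.exp 1))) hinj
    (Int.castAddHom ℚ)
  refine ⟨q, ?_⟩
  have := DFunLike.congr_fun hq (1 : ℤ)
  simpa using this

end CircleAux

section HomAux

lemma HSet.map_one {f : 𝕋 → 𝕋} (hf : f ∈ HSet) : f 1 = 1 := by
  have h := hf 1 1
  rw [one_mul] at h
  exact (left_eq_mul.mp h)

lemma HSet.map_zpow {f : 𝕋 → 𝕋} (hf : f ∈ HSet) (x : 𝕋) (d : ℤ) : f (x ^ d) = f x ^ d :=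
  _root_.map_zpow (MonoidHom.mk' f (fun a b => hf a b)) x d

lemma HSet.map_npow {f : 𝕋 → 𝕋} (hf : f ∈ HSet) (x : 𝕋) (d : ℕ) : f (x ^ d) = f x ^ d :=
  _root_.map_pow (MonoidHom.mk' f (fun a b => hf a b)) x d

lemma prod_zpow_sum (x : 𝕋) (s : Finset ℕ) (a : ℕ → ℤ) :
    ∏ j ∈ s, x ^ a j = x ^ (∑ j ∈ s, a j) := by
  classical
  induction s using Finset.induction_on with
  | empty => simp
  | insert _ _ hi ih =>
    rw [Finset.prod_insert hi, Finset.sum_insert hi, ih, ← zpow_add]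

end HomAux

/-- The topological centre of `E(𝕋^{ℤ≥0}, t) ≅ (𝓗, ⋆)` is `{t^n : n ∈ ℤ}`:
an element `φ ∈ 𝓗` has continuous left translation `ψ ↦ φ ⋆ ψ` on 𝓗 if and
only if `φ = ñ` for some `n ∈ ℤ`. -/
theorem stmt5 (φ : ℕ → 𝕋 → 𝕋) (hφ : φ ∈ Hcal) :
    Continuous (fun ψ : ↥Hcal => hmul φ ↑ψ) ↔ ∃ n : ℤ, φ = ntil n := by
  constructor
  · -- forward direction
    intro hcont
    obtain ⟨q, hq1⟩ := exists_q
    have hqtor : ∀ x ∈ TQ, q (Additive.ofMul x) = 0 := by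
      rintro x ⟨n, hn, hxn⟩
      have h1 : (n : ℤ) • q (Additive.ofMul x) = 0 := by
        rw [← map_zsmul q]
        have h2 : (n : ℤ) • Additive.ofMul x = Additive.ofMul (x ^ (n : ℤ)) :=
          (ofMul_zpow (n : ℤ) x).symm
        rw [h2, zpow_natCast, hxn]
        simp
      have hn0 : ((n : ℤ) : ℚ) ≠ 0 := by
        have : (0:ℕ) < n := hn
        positivity
      rw [zsmul_eq_mul] at h1
      exact (mul_eq_zero.mp h1).resolve_left hn0
    -- the perturbation family
    set χ : ℝ → 𝕋 → 𝕋 := fun θ y => Circle.exp (θ * ((q (Additive.ofMul y) : ℚ) : ℝ)) with hχ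
    have hχtor : ∀ θ, ∀ y, q (Additive.ofMul y) = 0 → χ θ y = 1 := by
      intro θ y hy
      simp [hχ, hy, Circle.exp_zero]
    have hχone : ∀ θ, χ θ 1 = 1 := by
      intro θ
      apply hχtor
      simp
    set Ψ : ℝ → ℕ → 𝕋 → 𝕋 := fun θ j =>
      if j = 0 then (fun x => x) else if j = 1 then χ θ else fun _ => 1 with hΨ
    have hΨ0 : ∀ θ, Ψ θ 0 = fun x => x := fun θ => rfl
    have hΨ1 : ∀ θ, Ψ θ 1 = χ θ := fun θ => rfl
    have hΨ2 : ∀ θ j, Ψ θ (j + 2) = fun _ => 1 := fun θ j => rfl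
    have mem : ∀ θ, Ψ θ ∈ Hcal := by
      intro θ
      refine ⟨?_, rfl, ?_⟩
      · intro k
        rcases k with _ | _ | k
        · intro x y; rfl
        · intro x y
          rw [hΨ1]
          simp only [hχ]
          rw [← Circle.exp_add]
          congr 1
          rw [show Additive.ofMul (x * y) = Additive.ofMul x + Additive.ofMul y from rfl,
            map_add]
          push_cast
          ring
        · intro x y
          rw [hΨ2]
          simp
      · intro k hk x hx
        have hrhs : ∏ j ∈ Finset.Icc 1 k, (Ψ θ 1)^[j] (x ^ stir k j) = 1 := by
          apply Finset.prod_eq_one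
          intro j hj
          obtain ⟨hj1, _⟩ := Finset.mem_Icc.mp hj
          obtain ⟨i, rfl⟩ : ∃ i, j = i + 1 := ⟨j - 1, by omega⟩
          rw [hΨ1, Function.iterate_succ_apply]
          have hz : χ θ (x ^ stir k (i + 1)) = 1 := by
            apply hχtor
            rw [show Additive.ofMul (x ^ stir k (i+1)) = stir k (i+1) • Additive.ofMul x from
              ofMul_zpow (stir k (i+1)) x, map_zsmul, hqtor x hx, smul_zero]
          rw [hz]
          exact Function.iterate_fixed (hχone θ) i
        rw [hrhs]
        rcases k with _ | _ | k
        · omega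
        · rw [hΨ1, Nat.factorial_one, pow_one]
          apply hχtor
          exact hqtor x hx
        · rw [hΨ2]
    have hΨcont : Continuous (fun θ : ℝ => (⟨Ψ θ, mem θ⟩ : ↥Hcal)) := by
      apply Continuous.subtype_mk
      apply continuous_pi
      intro j
      apply continuous_pi
      intro y
      rcases j with _ | _ | j
      · exact continuous_const
      · simp only [hΨ1, hχ]
        exact Circle.exp.continuous.comp (continuous_id.mul continuous_const)
      · exact continuous_const
    -- each φ m is a power map
    have key : ∀ m : ℕ, 1 ≤ m → ∃ nm : ℤ, ∀ y : 𝕋, φ m y = y ^ nm := by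
      intro m hm
      set x₀ : 𝕋 := Circle.exp 1 with hx₀
      have hE : Continuous fun θ : ℝ => hmul φ (Ψ θ) (m + 1) x₀ :=
        (continuous_apply x₀).comp ((continuous_apply (m + 1)).comp (hcont.comp hΨcont))
      have hform : ∀ θ, hmul φ (Ψ θ) (m + 1) x₀
          = φ m (Circle.exp θ) * φ (m + 1) x₀ := by
        intro θ
        show (∏ j ∈ Finset.range (m + 1 + 1), φ (m + 1 - j) (Ψ θ j x₀)) = _
        rw [Finset.prod_range_succ' (fun j => φ (m + 1 - j) (Ψ θ j x₀)) (m + 1),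
          Finset.prod_range_succ' (fun j => φ (m + 1 - (j + 1)) (Ψ θ (j + 1) x₀)) m]
        have hmid : ∏ i ∈ Finset.range m, φ (m + 1 - (i + 1 + 1)) (Ψ θ (i + 1 + 1) x₀) = 1 := by
          apply Finset.prod_eq_one
          intro i _
          rw [show Ψ θ (i + 1 + 1) x₀ = 1 from rfl]
          exact HSet.map_one (hφ.1 _)
        rw [hmid, one_mul]
        have h1 : Ψ θ (0 + 1) x₀ = Circle.exp θ := by
          rw [show (0 + 1 : ℕ) = 1 from rfl, hΨ1, hχ]
          simp only [hq1]
          norm_num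
        have h0 : Ψ θ 0 x₀ = x₀ := rfl
        rw [h1, h0]
        norm_num
      have hgc : Continuous fun θ : ℝ => φ m (Circle.exp θ) := by
        have : (fun θ : ℝ => φ m (Circle.exp θ))
            = fun θ => hmul φ (Ψ θ) (m + 1) x₀ * (φ (m + 1) x₀)⁻¹ := by
          funext θ
          rw [hform]
          group
        rw [this]
        exact hE.mul continuous_const
      obtain ⟨c, hcr⟩ := char_real _ hgc (by
        intro a b
        rw [Circle.exp_add]
        exact hφ.1 m _ _)
      have h2π : Circle.exp (c * (2 * π)) = 1 := by
        rw [← hcr (2 * π), Circle.exp_two_pi]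
        exact HSet.map_one (hφ.1 m)
      rw [Circle.exp_eq_one] at h2π
      obtain ⟨nm, hnm⟩ := h2π
      have hπ := Real.pi_pos
      have hceq : c = (nm : ℝ) := by
        have h2 : (2 * π) ≠ 0 := by positivity
        exact mul_right_cancel₀ h2 hnm
      refine ⟨nm, fun y => ?_⟩
      calc φ m y = φ m (Circle.exp (Complex.arg (y : ℂ))) := by rw [Circle.exp_arg]
        _ = Circle.exp (c * Complex.arg (y : ℂ)) := hcr _
        _ = Circle.exp ((nm : ℝ) * Complex.arg (y : ℂ)) := by rw [hceq]
        _ = Circle.exp (Complex.arg (y : ℂ)) ^ nm := (exp_zpow _ _).symm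
        _ = y ^ nm := by rw [Circle.exp_arg]
    obtain ⟨n, hn⟩ := key 1 le_rfl
    refine ⟨n, ?_⟩
    funext k
    rcases Nat.eq_zero_or_pos k with rfl | hk
    · rw [hφ.2.1]
      funext y
      show y = y ^ gchoose n 0
      rw [show gchoose n 0 = 1 from Ring.choose_zero_right n, zpow_one]
    · obtain ⟨nk, hnk⟩ := key k hk
      have hiter : ∀ (j : ℕ) (z : 𝕋), (φ 1)^[j] z = z ^ ((n : ℤ) ^ j) := by
        intro j
        induction j with
        | zero => intro z; simp
        | succ j ih =>
          intro z
          rw [Function.iterate_succ_apply', ih, hn, ← zpow_mul, pow_succ]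
      have hpow : ∀ x ∈ TQ,
          x ^ ((k.factorial : ℤ) * nk) = x ^ (∑ j ∈ Finset.Icc 1 k, stir k j * n ^ j) := by
        intro x hx
        have h1 : φ k (x ^ k.factorial) = x ^ ((k.factorial : ℤ) * nk) := by
          rw [hnk, ← zpow_natCast x k.factorial, ← zpow_mul]
        have h2 : ∏ j ∈ Finset.Icc 1 k, (φ 1)^[j] (x ^ stir k j)
            = x ^ (∑ j ∈ Finset.Icc 1 k, stir k j * n ^ j) := by
          rw [← prod_zpow_sum]
          apply Finset.prod_congr rfl
          intro j _
          rw [hiter j, ← zpow_mul]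
        rw [← h1, ← h2]
        exact hφ.2.2 k hk x hx
      have hdiff : (k.factorial : ℤ) * nk - (∑ j ∈ Finset.Icc 1 k, stir k j * n ^ j) = 0 := by
        apply eq_zero_of_torsion_zpow
        intro x hx
        rw [zpow_sub, hpow x hx, mul_inv_cancel]
      have heq : (k.factorial : ℤ) * nk = (k.factorial : ℤ) * gchoose n k := by
        rw [← key_stir k hk n]
        linarith
      have hfac : (k.factorial : ℤ) ≠ 0 := by
        exact_mod_cast k.factorial_ne_zero
      have hnkval : nk = gchoose n k := mul_left_cancel₀ hfac heq
      funext y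
      rw [hnk, hnkval]
      rfl
  · -- backward direction
    rintro ⟨n, rfl⟩
    apply continuous_pi
    intro k
    apply continuous_pi
    intro x
    show Continuous fun ψ : ↥Hcal =>
      ∏ j ∈ Finset.range (k + 1), ((ψ : ℕ → 𝕋 → 𝕋) j x) ^ gchoose n (k - j)
    apply continuous_finset_prod
    intro j _
    exact (((continuous_apply x).comp ((continuous_apply j).comp
      continuous_subtype_val))).zpow _
end
end
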